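/- Consider the permutation group G = ⟨ρ₋₁, ρ₀, ρ₁⟩ on {1,…,6} where ρ₋₁ = (3,4), ρ₀ = (2,3)(4,5), ρ₁ = (1,2)(5,6). Then G is isomorphic to C₂ × S₄, of order 48, acting transitively on the 6 points as the symmetry group of the cube on its faces. In particular G does not act independently on {1,2,3} and {4,5,6}: the setwise stabilizer of {1,2,3} does not induce all of S₃ × S₃ on the two triples. -/

import Mathlib

open Equiv

def up : Fin 6 → Fin 4 := ![0,0,0,1,1,2]
def vp : Fin 6 → Fin 4 := ![1,2,3,2,3,3]
def qp : Fin 4 → Fin 4 → Fin 6 :=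
  ![![0,0,1,2], ![0,0,3,4], ![1,3,0,5], ![2,4,5,0]]
def fp (σ : Perm (Fin 4)) (i : Fin 6) : Fin 6 := qp (σ (up i)) (σ (vp i))

theorem tabL : ∀ a b : Fin 4, a ≠ b →
    (up (qp a b) = a ∧ vp (qp a b) = b) ∨ (up (qp a b) = b ∧ vp (qp a b) = a) := by decide
theorem tabUV : ∀ i : Fin 6, up i ≠ vp i ∧ qp (up i) (vp i) = i := by decide
theorem tabSym : ∀ a b : Fin 4, qp a b = qp b a := by decide

theorem hLp (σ : Perm (Fin 4)) (i : Fin 6) : fp σ⁻¹ (fp σ i) = i := by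
  have hab : σ (up i) ≠ σ (vp i) := fun h => (tabUV i).1 (σ.injective h)
  unfold fp
  rcases tabL _ _ hab with ⟨h1, h2⟩ | ⟨h1, h2⟩ <;> rw [h1, h2] <;>
    simp only [Perm.inv_def, Equiv.symm_apply_apply]
  · exact (tabUV i).2
  · rw [tabSym]; exact (tabUV i).2

theorem hRp (σ : Perm (Fin 4)) (i : Fin 6) : fp σ (fp σ⁻¹ i) = i := by
  have := hLp σ⁻¹ i; rwa [inv_inv] at this

theorem hmulp (σ τ : Perm (Fin 4)) (i : Fin 6) : fp (σ * τ) i = fp σ (fp τ i) := by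
  have hab : τ (up i) ≠ τ (vp i) := fun h => (tabUV i).1 (τ.injective h)
  unfold fp
  simp only [Perm.mul_apply]
  rcases tabL _ _ hab with ⟨h1, h2⟩ | ⟨h1, h2⟩ <;> rw [h1, h2]
  exact tabSym _ _

def aperm (σ : Perm (Fin 4)) : Perm (Fin 6) := ⟨fp σ, fp σ⁻¹, hLp σ, hRp σ⟩

def Ahom : Perm (Fin 4) →* Perm (Fin 6) where
  toFun := aperm
  map_one' := Equiv.ext fun i => by
    show fp 1 i = i
    unfold fp; simp only [Perm.one_apply]; exact (tabUV i).2
  map_mul' σ τ := Equiv.ext fun i => hmulp σ τ i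

def oinv : Perm (Fin 6) := Equiv.swap 0 5 * Equiv.swap 1 4 * Equiv.swap 2 3

theorem compKey : ∀ a b c d : Fin 4, a ≠ b → c ≠ d → c ≠ a → c ≠ b → d ≠ a → d ≠ b →
    oinv (qp a b) = qp c d := by decide

theorem tabO : ∀ i : Fin 6, up (oinv i) ≠ up i ∧ up (oinv i) ≠ vp i ∧
    vp (oinv i) ≠ up i ∧ vp (oinv i) ≠ vp i := by decide

theorem ocomm (σ : Perm (Fin 4)) (i : Fin 6) : oinv (fp σ i) = fp σ (oinv i) := by
  obtain ⟨h1, h2, h3, h4⟩ := tabO i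
  have e : oinv (qp (σ (up i)) (σ (vp i))) = qp (σ (up (oinv i))) (σ (vp (oinv i))) :=
    compKey _ _ _ _ (fun h => (tabUV i).1 (σ.injective h))
      (fun h => (tabUV (oinv i)).1 (σ.injective h))
      (fun h => h1 (σ.injective h)) (fun h => h2 (σ.injective h))
      (fun h => h3 (σ.injective h)) (fun h => h4 (σ.injective h))
  exact e

theorem commA : ∀ (ε : Multiplicative (ZMod 2)) (σ : Perm (Fin 4)),
    Commute (if ε = 1 then 1 else oinv) (Ahom σ) := by
  intro ε σ
  split
  · exact Commute.one_left _
  · show oinv * aperm σ = aperm σ * oinv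
    exact Equiv.ext fun i => ocomm σ i

def gmap : Multiplicative (ZMod 2) →* Perm (Fin 6) where
  toFun ε := if ε = 1 then 1 else oinv
  map_one' := by simp
  map_mul' := by decide

def Fhom : Multiplicative (ZMod 2) × Perm (Fin 4) →* Perm (Fin 6) :=
  gmap.noncommCoprod Ahom commA

set_option maxHeartbeats 1600000 in
theorem funkey1 : ∀ x0 x1 x2 x3 : Fin 4,
    (∀ i, qp ((![x0,x1,x2,x3]) (up i)) ((![x0,x1,x2,x3]) (vp i)) = i) →
    ∀ a, (![x0,x1,x2,x3]) a = a := by decide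

set_option maxHeartbeats 1600000 in
theorem funkey2 : ∀ x0 x1 x2 x3 : Fin 4,
    ¬ (∀ i, qp ((![x0,x1,x2,x3]) (up i)) ((![x0,x1,x2,x3]) (vp i)) = oinv i) := by decide

theorem vec_eq (σ : Perm (Fin 4)) : ∀ x : Fin 4, (![σ 0, σ 1, σ 2, σ 3]) x = σ x := by
  intro x; fin_cases x <;> rfl

theorem aperm_eq_one {σ : Perm (Fin 4)} (h : aperm σ = 1) : σ = 1 := by
  apply Equiv.ext
  intro a
  have key := funkey1 (σ 0) (σ 1) (σ 2) (σ 3) (fun i => by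
    rw [vec_eq, vec_eq]
    exact congrArg (fun (e : Perm (Fin 6)) => e i) h) a
  rwa [vec_eq] at key

theorem aperm_ne_o (σ : Perm (Fin 4)) : aperm σ ≠ oinv := by
  intro h
  exact funkey2 (σ 0) (σ 1) (σ 2) (σ 3) fun i => by
    rw [vec_eq, vec_eq]
    exact congrArg (fun (e : Perm (Fin 6)) => e i) h

theorem Fhom_inj : Function.Injective Fhom := by
  rw [injective_iff_map_eq_one]
  rintro ⟨ε, σ⟩ hp
  have hF : gmap ε * Ahom σ = 1 := hp
  have h2 : ∀ z : ZMod 2, z = 0 ∨ z = 1 := by decide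
  rcases h2 ε.toAdd with hz | hz
  · have hε : ε = 1 := by
      have : Multiplicative.ofAdd ε.toAdd = Multiplicative.ofAdd 0 := congrArg _ hz
      simpa using this
    subst hε
    simp only [map_one, one_mul] at hF
    have : σ = 1 := aperm_eq_one hF
    rw [this]; rfl
  · have hε : ε = Multiplicative.ofAdd 1 := by
      have : Multiplicative.ofAdd ε.toAdd = Multiplicative.ofAdd 1 := congrArg _ hz
      simpa using this
    exfalso
    subst hε
    have hg : gmap (Multiplicative.ofAdd (1 : ZMod 2)) = oinv := by decide
    rw [hg] at hF
    have h5 : oinv⁻¹ = Ahom σ := inv_eq_of_mul_eq_one_right hF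
    have hoo : oinv⁻¹ = oinv := by decide
    exact aperm_ne_o σ (h5.symm.trans hoo)

theorem commAo (σ : Perm (Fin 4)) : Commute (Ahom σ) oinv :=
  Equiv.ext fun i => (ocomm σ i).symm

theorem commGo (ε : Multiplicative (ZMod 2)) : Commute (gmap ε) oinv := by
  show Commute (if ε = 1 then 1 else oinv) oinv
  split
  · exact Commute.one_left _
  · exact Commute.refl _


theorem cube_symmetry_group_on_faces (G : Subgroup (Equiv.Perm (Fin 6)))
    (hG : G = Subgroup.closure {Equiv.swap 2 3,
      Equiv.swap 1 2 * Equiv.swap 3 4, Equiv.swap 0 1 * Equiv.swap 4 5}) :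
    Nat.card G = 48 ∧
    Nonempty (G ≃* Multiplicative (ZMod 2) × Equiv.Perm (Fin 4)) ∧
    (∀ x y : Fin 6, ∃ g ∈ G, g x = y) ∧
    ¬ (∀ π : Equiv.Perm (Fin 6),
        (∀ x ∈ ({0, 1, 2} : Set (Fin 6)), π x ∈ ({0, 1, 2} : Set (Fin 6))) →
          π ∈ G) := by
  subst hG
  have hs1 : Equiv.swap (2 : Fin 6) 3 ∈ Subgroup.closure {Equiv.swap 2 3,
      Equiv.swap 1 2 * Equiv.swap 3 4, Equiv.swap 0 1 * Equiv.swap 4 5} :=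
    Subgroup.subset_closure (Set.mem_insert _ _)
  have hs2 : Equiv.swap (1 : Fin 6) 2 * Equiv.swap 3 4 ∈ Subgroup.closure {Equiv.swap 2 3,
      Equiv.swap 1 2 * Equiv.swap 3 4, Equiv.swap 0 1 * Equiv.swap 4 5} :=
    Subgroup.subset_closure (Set.mem_insert_of_mem _ (Set.mem_insert _ _))
  have hs3 : Equiv.swap (0 : Fin 6) 1 * Equiv.swap 4 5 ∈ Subgroup.closure {Equiv.swap 2 3,
      Equiv.swap 1 2 * Equiv.swap 3 4, Equiv.swap 0 1 * Equiv.swap 4 5} :=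
    Subgroup.subset_closure (Set.mem_insert_of_mem _ (Set.mem_insert_of_mem _ rfl))
  set s1 : Perm (Fin 6) := Equiv.swap 2 3 with hs1d
  set s2 : Perm (Fin 6) := Equiv.swap 1 2 * Equiv.swap 3 4 with hs2d
  set s3 : Perm (Fin 6) := Equiv.swap 0 1 * Equiv.swap 4 5 with hs3d
  set SS : Set (Perm (Fin 6)) := {s1, s2, s3} with hSS
  have ho : oinv ∈ Subgroup.closure SS := by
    have h : oinv = s1*s2*s1*s2*s3*s2*s1*s2*s3 := by rw [hs1d, hs2d, hs3d]; decide
    rw [h]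
    exact mul_mem (mul_mem (mul_mem (mul_mem (mul_mem (mul_mem (mul_mem (mul_mem hs1 hs2)
      hs1) hs2) hs3) hs2) hs1) hs2) hs3
  have hswap : ∀ a b : Fin 4, a ≠ b → Ahom (Equiv.swap a b) ∈ Subgroup.closure SS := by
    intro a b hab
    have key : ∀ a b : Fin 4, a ≠ b →
        (aperm (Equiv.swap a b) = s1*s2*s1 ∨
         aperm (Equiv.swap a b) = s1*s2*s3*s2*s1 ∨
         aperm (Equiv.swap a b) = s2*s1*s2*s3*s2*s1*s2 ∨
         aperm (Equiv.swap a b) = s3 ∨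
         aperm (Equiv.swap a b) = s2*s3*s2 ∨
         aperm (Equiv.swap a b) = s2) := by
      rw [hs1d, hs2d, hs3d]; decide
    show aperm (Equiv.swap a b) ∈ _
    rcases key a b hab with h | h | h | h | h | h <;> rw [h]
    · exact mul_mem (mul_mem hs1 hs2) hs1
    · exact mul_mem (mul_mem (mul_mem (mul_mem hs1 hs2) hs3) hs2) hs1
    · exact mul_mem (mul_mem (mul_mem (mul_mem (mul_mem (mul_mem hs2 hs1) hs2) hs3) hs2) hs1) hs2
    · exact hs3
    · exact mul_mem (mul_mem hs2 hs3) hs2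
    · exact hs2
  have hA : ∀ σ : Perm (Fin 4), Ahom σ ∈ Subgroup.closure SS := by
    intro σ
    have hσ : σ ∈ Subgroup.closure {τ : Perm (Fin 4) | τ.IsSwap} := by
      rw [Equiv.Perm.closure_isSwap]; exact Subgroup.mem_top σ
    refine Subgroup.closure_induction ?_ ?_ ?_ ?_ hσ
    · rintro τ ⟨a, b, hab, rfl⟩
      exact hswap a b hab
    · rw [map_one]; exact one_mem _
    · intro x y _ _ ihx ihy; rw [map_mul]; exact mul_mem ihx ihy
    · intro x _ ih; rw [map_inv]; exact inv_mem ih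
  have hrange : Fhom.range = Subgroup.closure SS := by
    apply le_antisymm
    · rintro x ⟨p, rfl⟩
      rw [show Fhom p = gmap p.1 * Ahom p.2 from rfl]
      refine mul_mem ?_ (hA p.2)
      show (if p.1 = 1 then 1 else oinv) ∈ _
      split
      · exact one_mem _
      · exact ho
    · rw [Subgroup.closure_le]
      rintro x hx
      simp only [hSS, Set.mem_insert_iff, Set.mem_singleton_iff] at hx
      rcases hx with rfl | rfl | rfl
      · exact ⟨(Multiplicative.ofAdd 1, Equiv.swap 0 3 * Equiv.swap 1 2),
          by rw [hs1d]; decide⟩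
      · exact ⟨(1, Equiv.swap 2 3), by rw [hs2d]; decide⟩
      · exact ⟨(1, Equiv.swap 1 2), by rw [hs3d]; decide⟩
  refine ⟨?_, ?_, ?_, ?_⟩
  · rw [← hrange]
    have h1 : Nat.card Fhom.range = Nat.card (Multiplicative (ZMod 2) × Perm (Fin 4)) :=
      Nat.card_congr (MonoidHom.ofInjective Fhom_inj).symm.toEquiv
    rw [h1, Nat.card_eq_fintype_card, Fintype.card_prod, Fintype.card_perm]
    rfl
  · exact ⟨(MulEquiv.subgroupCongr hrange.symm).trans (MonoidHom.ofInjective Fhom_inj).symm⟩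
  · have reach : ∀ x : Fin 6, ∃ g ∈ Subgroup.closure SS, g 0 = x := by
      intro x
      fin_cases x
      · exact ⟨1, one_mem _, rfl⟩
      · exact ⟨s3, hs3, by rw [hs3d]; decide⟩
      · exact ⟨s2*s3, mul_mem hs2 hs3, by rw [hs2d, hs3d]; decide⟩
      · exact ⟨s1*s2*s3, mul_mem (mul_mem hs1 hs2) hs3, by rw [hs1d, hs2d, hs3d]; decide⟩
      · exact ⟨s2*s1*s2*s3, mul_mem (mul_mem (mul_mem hs2 hs1) hs2) hs3,
          by rw [hs1d, hs2d, hs3d]; decide⟩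
      · exact ⟨s3*s2*s1*s2*s3, mul_mem (mul_mem (mul_mem (mul_mem hs3 hs2) hs1) hs2) hs3,
          by rw [hs1d, hs2d, hs3d]; decide⟩
    intro x y
    obtain ⟨gx, hgx, hx⟩ := reach x
    obtain ⟨gy, hgy, hy⟩ := reach y
    refine ⟨gy * gx⁻¹, mul_mem hgy (inv_mem hgx), ?_⟩
    rw [← hx]
    show gy (gx⁻¹ (gx 0)) = y
    rw [Perm.inv_def, Equiv.symm_apply_apply]
    exact hy
  · intro h
    have hmem := h (Equiv.swap 0 1) (by
      intro x hx
      simp only [Set.mem_insert_iff, Set.mem_singleton_iff] at hx ⊢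
      rcases hx with rfl | rfl | rfl <;> decide)
    rw [← hrange] at hmem
    obtain ⟨p, hp⟩ := hmem
    have hc : Commute (Fhom p) oinv := (commGo p.1).mul_left (commAo p.2)
    rw [hp] at hc
    have hne : Equiv.swap (0 : Fin 6) 1 * oinv ≠ oinv * Equiv.swap (0 : Fin 6) 1 := by decide
    exact hne hc
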